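/- Let n ≥ 3 and 2 ≤ q ≤ n − 1 be integers. Then there exists D ∈ ℕ such that for every even integer d ≥ D the following holds: setting I = ⟨x_0^d, …, x_{n−1}^d, y^{d/2}⟩ in R, m_1 = x_0^{d−1}⋯x_{q−2}^{d−1}x_{q−1}^{q+1}y^{d/2−1}, and m_2 = x_0^{d−1}⋯x_{q−1}^{d−1}x_q^{q}, the number of monomials of weighted degree d dividing m_2 is at most the number of monomials u of weighted degree d such that u is none of x_0^d, …, x_{n−1}^d, y^{d/2} and u·m_1 ∈ I. -/

import Mathlib

open MvPolynomial

/-- The weighted degree of an exponent vector on the variables of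
`R = k[x_0, …, x_{n-1}, y]`, where each `x_j` has degree 1 and `y` has degree 2. -/
def degw (n : ℕ) (σ : (Fin n ⊕ Unit) →₀ ℕ) : ℕ :=
  (∑ j : Fin n, σ (Sum.inl j)) + 2 * σ (Sum.inr ())

lemma sum_single_inl {n : ℕ} (c : Fin n → ℕ) (i : Fin n) :
    (∑ j : Fin n, Finsupp.single (Sum.inl j : Fin n ⊕ Unit) (c j)) (Sum.inl i) = c i := by
  rw [Finsupp.finset_sum_apply]
  simp [Finsupp.single_apply]

lemma sum_single_inr {n : ℕ} (c : Fin n → ℕ) :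
    (∑ j : Fin n, Finsupp.single (Sum.inl j : Fin n ⊕ Unit) (c j)) (Sum.inr ()) = 0 := by
  rw [Finsupp.finset_sum_apply]
  simp [Finsupp.single_apply]

lemma prodX {k : Type*} [CommSemiring k] {n : ℕ} (c : Fin n → ℕ) :
    (∏ j : Fin n, (X (Sum.inl j) : MvPolynomial (Fin n ⊕ Unit) k) ^ c j)
      = monomial (∑ j : Fin n, Finsupp.single (Sum.inl j) (c j)) 1 := by
  rw [monomial_sum_one]
  exact Finset.prod_congr rfl fun j _ => X_pow_eq_monomial

lemma memA {k : Type*} [Field k] {n q d : ℕ} {σ : (Fin n ⊕ Unit) →₀ ℕ}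
    (h : monomial σ (1 : k) ∣
      ∏ j : Fin n, X (Sum.inl j) ^ (if (j : ℕ) < q then d - 1 else if (j : ℕ) = q then q else 0)) :
    (∀ j : Fin n, σ (Sum.inl j) ≤ if (j : ℕ) < q then d - 1 else if (j : ℕ) = q then q else 0)
      ∧ σ (Sum.inr ()) = 0 := by
  rw [prodX, monomial_dvd_monomial] at h
  obtain ⟨h1 | h2, -⟩ := h
  · exact absurd h1 one_ne_zero
  · rw [Finsupp.le_def] at h2
    refine ⟨fun j => ?_, ?_⟩
    · simpa [sum_single_inl] using h2 (Sum.inl j)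
    · simpa [sum_single_inr] using h2 (Sum.inr ())

lemma genset_eq {k : Type*} [Field k] {n d : ℕ} :
    ({(X (Sum.inr ()) : MvPolynomial (Fin n ⊕ Unit) k) ^ (d / 2)} ∪
        Set.range fun j : Fin n => (X (Sum.inl j) : MvPolynomial (Fin n ⊕ Unit) k) ^ d)
      = (fun s => monomial s (1 : k)) ''
          ({Finsupp.single (Sum.inr ()) (d / 2)} ∪
            Set.range fun j : Fin n => Finsupp.single (Sum.inl j) d) := by
  rw [Set.image_union, Set.image_singleton, ← Set.range_comp]
  simp [Function.comp_def, X_pow_eq_monomial]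

lemma memI {k : Type*} [Field k] {n q d : ℕ} {σ : (Fin n ⊕ Unit) →₀ ℕ}
    (h : d / 2 ≤ σ (Sum.inr ()) + (d / 2 - 1) ∨
      ∃ j : Fin n, d ≤ σ (Sum.inl j) +
        (if (j : ℕ) < q - 1 then d - 1 else if (j : ℕ) = q - 1 then q + 1 else 0)) :
    monomial σ (1 : k) *
        ((∏ j : Fin n, X (Sum.inl j) ^
            (if (j : ℕ) < q - 1 then d - 1 else if (j : ℕ) = q - 1 then q + 1 else 0)) *
          X (Sum.inr ()) ^ (d / 2 - 1)) ∈
      Ideal.span ({(X (Sum.inr ()) : MvPolynomial (Fin n ⊕ Unit) k) ^ (d / 2)} ∪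
        Set.range fun j : Fin n =>
          (X (Sum.inl j) : MvPolynomial (Fin n ⊕ Unit) k) ^ d) := by
  classical
  rw [genset_eq, prodX, X_pow_eq_monomial, monomial_mul, monomial_mul, one_mul, one_mul,
    mem_ideal_span_monomial_image]
  intro xi hxi
  rw [support_monomial, if_neg one_ne_zero, Finset.mem_singleton] at hxi
  subst hxi
  rcases h with h | ⟨j, hj⟩
  · refine ⟨Finsupp.single (Sum.inr ()) (d / 2), Or.inl rfl, Finsupp.single_le_iff.mpr ?_⟩
    simpa [Finsupp.add_apply, sum_single_inr] using h
  · refine ⟨Finsupp.single (Sum.inl j) d, Or.inr ⟨j, rfl⟩, Finsupp.single_le_iff.mpr ?_⟩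
    simpa [Finsupp.add_apply, sum_single_inl, Finsupp.single_apply] using hj


/-- Let `n ≥ 3` and `2 ≤ q ≤ n - 1`. Then there is `D` such that for every
even `d ≥ D`, with `I = ⟨x_0^d, …, x_{n-1}^d, y^{d/2}⟩`,
`m₁ = x_0^{d-1} ⋯ x_{q-2}^{d-1} x_{q-1}^{q+1} y^{d/2-1}` and
`m₂ = x_0^{d-1} ⋯ x_{q-1}^{d-1} x_q^{q}` in `R = k[x_0, …, x_{n-1}, y]`
(with `deg x_j = 1`, `deg y = 2`): the number of monomials of weighted degree `d` dividing
`m₂` is at most the number of monomials `u` of weighted degree `d` which are none of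
`x_0^d, …, x_{n-1}^d, y^{d/2}` and satisfy `u * m₁ ∈ I`. -/
theorem stmt_14 (k : Type*) [Field k] (n q : ℕ) (hn : 3 ≤ n) (hq1 : 2 ≤ q) (hq2 : q ≤ n - 1) :
    ∃ D : ℕ, ∀ d : ℕ, D ≤ d → Even d →
      Set.ncard {σ : (Fin n ⊕ Unit) →₀ ℕ | degw n σ = d ∧
          monomial σ (1 : k) ∣
            ∏ j : Fin n, X (Sum.inl j) ^
              (if (j : ℕ) < q then d - 1 else if (j : ℕ) = q then q else 0)} ≤
      Set.ncard {σ : (Fin n ⊕ Unit) →₀ ℕ | degw n σ = d ∧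
          (∀ j : Fin n,
            monomial σ (1 : k) ≠ (X (Sum.inl j) : MvPolynomial (Fin n ⊕ Unit) k) ^ d) ∧
          monomial σ (1 : k) ≠ (X (Sum.inr ()) : MvPolynomial (Fin n ⊕ Unit) k) ^ (d / 2) ∧
          monomial σ (1 : k) *
              ((∏ j : Fin n, X (Sum.inl j) ^
                  (if (j : ℕ) < q - 1 then d - 1 else if (j : ℕ) = q - 1 then q + 1 else 0)) *
                X (Sum.inr ()) ^ (d / 2 - 1)) ∈
            Ideal.span ({(X (Sum.inr ()) : MvPolynomial (Fin n ⊕ Unit) k) ^ (d / 2)} ∪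
              Set.range fun j : Fin n =>
                (X (Sum.inl j) : MvPolynomial (Fin n ⊕ Unit) k) ^ d)} := by
  classical
  refine ⟨2 * n + 4, fun d hD _hEven => ?_⟩
  have hqn : q < n := by omega
  have hqn1 : q - 1 < n := by omega
  set Q : Fin n := ⟨q, hqn⟩ with hQ
  set P : Fin n := ⟨q - 1, hqn1⟩ with hP
  set f : ((Fin n ⊕ Unit) →₀ ℕ) → ((Fin n ⊕ Unit) →₀ ℕ) := fun σ =>
    if σ (Sum.inl Q) ≤ 1 then σ else
      Finsupp.equivFunOnFinite.symm
        (Sum.elim (Function.update (fun j => σ (Sum.inl j)) Q (σ (Sum.inl Q) % 2))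
          (fun _ => σ (Sum.inl Q) / 2)) with hf
  refine Set.ncard_le_ncard_of_injOn f ?_ ?_ ?_
  · -- maps to
    rintro σ ⟨hdeg, hdvd⟩
    obtain ⟨hle, hy⟩ := memA (q := q) (d := d) hdvd
    have hsum : ∑ j : Fin n, σ (Sum.inl j) = d := by
      simp only [degw] at hdeg; omega
    have hQle : σ (Sum.inl Q) ≤ q := by
      have := hle Q
      simp only [hQ] at this
      simpa using this
    by_cases hc : σ (Sum.inl Q) ≤ 1
    · have hfσ : f σ = σ := by rw [hf]; exact if_pos hc
      rw [hfσ]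
      refine ⟨hdeg, ?_, ?_, memI ?_⟩
      · intro j h
        rw [X_pow_eq_monomial] at h
        have heq := monomial_left_injective (one_ne_zero (α := k)) h
        have h2 : σ (Sum.inl j) = d := by rw [heq]; simp
        have h3 := hle j
        split_ifs at h3 <;> omega
      · intro h
        rw [X_pow_eq_monomial] at h
        have heq := monomial_left_injective (one_ne_zero (α := k)) h
        have h2 : σ (Sum.inr ()) = d / 2 := by rw [heq]; simp
        omega
      · by_cases hex : ∃ j : Fin n, (j : ℕ) < q - 1 ∧ 1 ≤ σ (Sum.inl j)
        · obtain ⟨j, hj1, hj2⟩ := hex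
          exact Or.inr ⟨j, by rw [if_pos hj1]; omega⟩
        · push_neg at hex
          refine Or.inr ⟨P, ?_⟩
          have hz : ∀ j : Fin n, j ∉ ({P, Q} : Finset (Fin n)) → σ (Sum.inl j) = 0 := by
            intro j hj
            simp only [Finset.mem_insert, Finset.mem_singleton] at hj
            push_neg at hj
            have h1 : (j : ℕ) ≠ q - 1 := fun h => hj.1 (Fin.ext (by rw [hP, h]))
            have h2 : (j : ℕ) ≠ q := fun h => hj.2 (Fin.ext (by rw [hQ, h]))
            rcases lt_trichotomy (j : ℕ) q with h | h | h
            · have := hex j (by omega)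
              omega
            · exact absurd h h2
            · have h3 := hle j
              rw [if_neg (by omega), if_neg h2] at h3
              omega
          have hPQ : P ≠ Q := by
            rw [hP, hQ, Ne, Fin.mk.injEq]; omega
          have hkey : σ (Sum.inl P) + σ (Sum.inl Q) = d := by
            have h4 := Finset.sum_subset (Finset.subset_univ ({P, Q} : Finset (Fin n)))
              (fun j _ hj => hz j hj)
            rw [Finset.sum_pair hPQ] at h4
            omega
          have hitP : (if ((P : Fin n) : ℕ) < q - 1 then d - 1
              else if ((P : Fin n) : ℕ) = q - 1 then q + 1 else 0) = q + 1 := by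
            rw [hP]; simp
          rw [hitP]
          omega
    · have hfσ : f σ = Finsupp.equivFunOnFinite.symm
          (Sum.elim (Function.update (fun j => σ (Sum.inl j)) Q (σ (Sum.inl Q) % 2))
            (fun _ => σ (Sum.inl Q) / 2)) := by rw [hf]; exact if_neg hc
      have hτl : ∀ j : Fin n, (f σ) (Sum.inl j)
          = Function.update (fun j => σ (Sum.inl j)) Q (σ (Sum.inl Q) % 2) j := by
        intro j; rw [hfσ]; simp only [Finsupp.coe_equivFunOnFinite_symm, Sum.elim_inl]
      have hτy : (f σ) (Sum.inr ()) = σ (Sum.inl Q) / 2 := by rw [hfσ]; simp only [Finsupp.coe_equivFunOnFinite_symm, Sum.elim_inr]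
      have hsplit : σ (Sum.inl Q) + ∑ j ∈ Finset.univ \ {Q}, σ (Sum.inl j) = d := by
        rw [← Finset.erase_eq,
          Finset.add_sum_erase Finset.univ (fun j => σ (Sum.inl j)) (Finset.mem_univ Q)]
        exact hsum
      refine ⟨?_, ?_, ?_, memI (Or.inl ?_)⟩
      · simp only [degw]
        rw [Finset.sum_congr rfl (fun j _ => hτl j),
          Finset.sum_update_of_mem (Finset.mem_univ Q), hτy]
        omega
      · intro j h
        rw [X_pow_eq_monomial] at h
        have heq := monomial_left_injective (one_ne_zero (α := k)) h
        have h2 : (f σ) (Sum.inr ()) = 0 := by rw [heq]; simp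
        rw [hτy] at h2
        omega
      · intro h
        have hex : ∃ j : Fin n, j ≠ Q ∧ σ (Sum.inl j) ≠ 0 := by
          by_contra hno
          push_neg at hno
          have hz : ∀ j : Fin n, j ∉ ({Q} : Finset (Fin n)) → σ (Sum.inl j) = 0 := by
            intro j hj
            exact hno j (by simpa using hj)
          have h4 := Finset.sum_subset (Finset.subset_univ ({Q} : Finset (Fin n)))
            (fun j _ hj => hz j hj)
          rw [Finset.sum_singleton] at h4
          omega
        obtain ⟨j₀, hj₀Q, hj₀⟩ := hex
        rw [X_pow_eq_monomial] at h
        have heq := monomial_left_injective (one_ne_zero (α := k)) h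
        have h2 : (f σ) (Sum.inl j₀) = 0 := by
          rw [heq]; simp [Finsupp.single_apply]
        rw [hτl j₀, Function.update_of_ne hj₀Q] at h2
        exact hj₀ h2
      · rw [hτy]
        omega
  · -- injective
    rintro σ ⟨_, hdvd⟩ σ' ⟨_, hdvd'⟩ heq
    obtain ⟨-, hy⟩ := memA (q := q) (d := d) hdvd
    obtain ⟨-, hy'⟩ := memA (q := q) (d := d) hdvd'
    have heval : ∀ τ : (Fin n ⊕ Unit) →₀ ℕ, ¬ τ (Sum.inl Q) ≤ 1 →
        ((f τ) (Sum.inr ()) = τ (Sum.inl Q) / 2 ∧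
          (f τ) (Sum.inl Q) = τ (Sum.inl Q) % 2 ∧
          ∀ j : Fin n, j ≠ Q → (f τ) (Sum.inl j) = τ (Sum.inl j)) := by
      intro τ hc
      have hfτ : f τ = Finsupp.equivFunOnFinite.symm
          (Sum.elim (Function.update (fun j => τ (Sum.inl j)) Q (τ (Sum.inl Q) % 2))
            (fun _ => τ (Sum.inl Q) / 2)) := by rw [hf]; exact if_neg hc
      refine ⟨by rw [hfτ]; simp only [Finsupp.coe_equivFunOnFinite_symm, Sum.elim_inr], by rw [hfτ]; simp only [Finsupp.coe_equivFunOnFinite_symm, Sum.elim_inl, Function.update_self], fun j hj => ?_⟩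
      rw [hfτ]
      simp only [Finsupp.coe_equivFunOnFinite_symm, Sum.elim_inl, Function.update_of_ne hj]
    by_cases h1 : σ (Sum.inl Q) ≤ 1 <;> by_cases h2 : σ' (Sum.inl Q) ≤ 1
    · have e1 : f σ = σ := by rw [hf]; exact if_pos h1
      have e2 : f σ' = σ' := by rw [hf]; exact if_pos h2
      rw [e1, e2] at heq
      exact heq
    · exfalso
      have e1 : f σ = σ := by rw [hf]; exact if_pos h1
      have h3 := DFunLike.congr_fun heq (Sum.inr ())
      rw [e1, hy, (heval σ' h2).1] at h3
      omega
    · exfalso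
      have e2 : f σ' = σ' := by rw [hf]; exact if_pos h2
      have h3 := DFunLike.congr_fun heq (Sum.inr ())
      rw [e2, hy', (heval σ h1).1] at h3
      omega
    · obtain ⟨ha1, ha2, ha3⟩ := heval σ h1
      obtain ⟨hb1, hb2, hb3⟩ := heval σ' h2
      have hQeq : σ (Sum.inl Q) = σ' (Sum.inl Q) := by
        have c1 := DFunLike.congr_fun heq (Sum.inr ())
        have c2 := DFunLike.congr_fun heq (Sum.inl Q)
        rw [ha1, hb1] at c1
        rw [ha2, hb2] at c2
        omega
      ext v
      match v with
      | Sum.inl j =>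
        by_cases hj : j = Q
        · rw [hj]; exact hQeq
        · have c := DFunLike.congr_fun heq (Sum.inl j)
          rw [ha3 j hj, hb3 j hj] at c
          exact c
      | Sum.inr () => rw [hy, hy']
  · -- finiteness
    refine Set.Finite.subset (Set.finite_Icc 0 (Finsupp.equivFunOnFinite.symm fun _ => d)) ?_
    rintro σ ⟨hdeg, -⟩
    have hdeg' : (∑ j : Fin n, σ (Sum.inl j)) + 2 * σ (Sum.inr ()) = d := hdeg
    refine Set.mem_Icc.mpr ⟨zero_le, Finsupp.le_def.mpr fun v => ?_⟩
    match v with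
    | Sum.inl j =>
      have h1 : σ (Sum.inl j) ≤ ∑ i : Fin n, σ (Sum.inl i) :=
        Finset.single_le_sum (f := fun i => σ (Sum.inl i)) (fun _ _ => Nat.zero_le _)
          (Finset.mem_univ j)
      simpa using (by omega : σ (Sum.inl j) ≤ d)
    | Sum.inr () =>
      simpa using (by omega : σ (Sum.inr ()) ≤ d)
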